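/- Let (X, φ) be a minimal action of Z^d by homeomorphisms on a compact space X. Then the first cohomology group H^1(X, φ) (continuous Z-valued cocycles modulo coboundaries) is torsion-free. -/

import Mathlib

variable (d : ℕ) (X : Type*) [TopologicalSpace X] [AddAction (Fin d → ℤ) X]

/-- Continuous cocycles for a `ℤᵈ`-action `(X, φ)`: continuous
`θ : X × ℤᵈ → ℤ` with `θ(x, m+n) = θ(x,m) + θ(φᵐ(x), n)`. -/
def Cocycles : AddSubgroup ((X × (Fin d → ℤ)) → ℤ) where
  carrier := {θ | (∀ n : Fin d → ℤ, Continuous fun x : X => θ (x, n)) ∧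
    ∀ (x : X) (m n : Fin d → ℤ), θ (x, m + n) = θ (x, m) + θ (m +ᵥ x, n)}
  zero_mem' := ⟨fun _ => continuous_const, by intro x m n; simp⟩
  add_mem' := by
    rintro a b ⟨hac, ha⟩ ⟨hbc, hb⟩
    refine ⟨fun n => (hac n).add (hbc n), fun x m n => ?_⟩
    simp only [Pi.add_apply, ha x m n, hb x m n]
    ring
  neg_mem' := by
    rintro a ⟨hac, ha⟩
    refine ⟨fun n => (hac n).neg, fun x m n => ?_⟩
    simp only [Pi.neg_apply, ha x m n]
    ring

/-- Coboundaries: `θ(x,n) = f(φⁿ(x)) − f(x)` for a continuous `f : X → ℤ`. -/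
def Coboundaries : AddSubgroup ((X × (Fin d → ℤ)) → ℤ) where
  carrier := {θ | ∃ f : X → ℤ, Continuous f ∧
    ∀ (x : X) (n : Fin d → ℤ), θ (x, n) = f (n +ᵥ x) - f x}
  zero_mem' := ⟨0, continuous_const, by intro x n; simp⟩
  add_mem' := by
    rintro a b ⟨f, hfc, hf⟩ ⟨g, hgc, hg⟩
    refine ⟨f + g, hfc.add hgc, fun x n => ?_⟩
    simp only [Pi.add_apply, hf x n, hg x n]
    ring
  neg_mem' := by
    rintro a ⟨f, hfc, hf⟩
    refine ⟨-f, hfc.neg, fun x n => ?_⟩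
    simp only [Pi.neg_apply, hf x n]
    ring

/-- The first (continuous) cohomology group `H¹(X, φ)`. -/
def H1 := Cocycles d X ⧸ (Coboundaries d X).addSubgroupOf (Cocycles d X)

noncomputable instance : AddCommGroup (H1 d X) :=
  QuotientAddGroup.Quotient.addCommGroup _

/-- For a minimal action of `ℤᵈ` by homeomorphisms on a compact space `X`, the
first cohomology group `H¹(X, φ)` is torsion-free. -/
theorem h1_torsionFree [CompactSpace X]
    (hcont : ∀ n : Fin d → ℤ, Continuous fun x : X => n +ᵥ x)
    (hmin : ∀ x : X, Dense {y : X | ∃ n : Fin d → ℤ, n +ᵥ x = y}) :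
    ∀ (a : H1 d X) (k : ℕ), k ≠ 0 → k • a = 0 → a = 0 := by
  intro a k hk hka
  obtain ⟨θ, rfl⟩ := QuotientAddGroup.mk'_surjective ((Coboundaries d X).addSubgroupOf (Cocycles d X)) a
  rw [QuotientAddGroup.mk'_apply] at hka ⊢
  refine (QuotientAddGroup.eq_zero_iff (N := (Coboundaries d X).addSubgroupOf (Cocycles d X)) θ).mpr ?_
  have hk' : ((k • θ : Cocycles d X) : (X × (Fin d → ℤ)) → ℤ) ∈ Coboundaries d X := by
    have : k • (QuotientAddGroup.mk θ : H1 d X) = QuotientAddGroup.mk (k • θ) := by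
      simp
    exact (QuotientAddGroup.eq_zero_iff (N := (Coboundaries d X).addSubgroupOf (Cocycles d X)) (k • θ)).mp (this.symm.trans hka)
  obtain ⟨f, hfc, hf⟩ := hk'
  rcases isEmpty_or_nonempty X with hX | hX
  · exact ⟨fun _ => 0, continuous_const, fun x => hX.elim x⟩
  obtain ⟨x₀⟩ := hX
  have hco : ∀ (x : X) (n : Fin d → ℤ),
      (k : ℤ) * (θ : (X × (Fin d → ℤ)) → ℤ) (x, n) = f (n +ᵥ x) - f x := by
    intro x n
    have := hf x n
    simpa [nsmul_eq_mul] using this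
  have hdvd : ∀ y : X, (k : ℤ) ∣ f y - f x₀ := by
    intro y
    have hS : IsClosed {y : X | (k : ℤ) ∣ f y - f x₀} := by
      have : {y : X | (k : ℤ) ∣ f y - f x₀} = f ⁻¹' {m : ℤ | (k : ℤ) ∣ m - f x₀} := rfl
      rw [this]
      exact (isClosed_discrete _).preimage hfc
    have horb : {y : X | ∃ n : Fin d → ℤ, n +ᵥ x₀ = y} ⊆ {y : X | (k : ℤ) ∣ f y - f x₀} := by
      rintro y ⟨n, rfl⟩
      exact ⟨(θ : (X × (Fin d → ℤ)) → ℤ) (x₀, n), (hco x₀ n).symm⟩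
    have huniv := hS.closure_subset_iff.mpr horb
    rw [(hmin x₀).closure_eq] at huniv
    exact huniv (Set.mem_univ y)
  set g : X → ℤ := fun y => (f y - f x₀) / k with hg
  have hgc : Continuous g := (continuous_of_discreteTopology
    (f := fun m : ℤ => (m - f x₀) / k)).comp hfc
  have hkg : ∀ y : X, (k : ℤ) * g y = f y - f x₀ := fun y =>
    Int.mul_ediv_cancel' (hdvd y)
  refine ⟨g, hgc, fun x n => ?_⟩
  have hk0 : (k : ℤ) ≠ 0 := Int.natCast_ne_zero.mpr hk
  apply mul_left_cancel₀ hk0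
  show (k : ℤ) * (θ : (X × (Fin d → ℤ)) → ℤ) (x, n) = (k : ℤ) * (g (n +ᵥ x) - g x)
  rw [hco x n, mul_sub, hkg, hkg]
  ring
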